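/- Under the conditions of Theorem 2, P(⋃{H : H closed half-space with P(H) ≤ s}) = O(s) as s ↓ 0. -/

import Mathlib

open MeasureTheory Filter
open scoped RealInnerProductSpace Pointwise

lemma aux_line_null {d : ℕ} (α : ℝ) (hα : 0 < α) (ν : Measure (EuclideanSpace ℝ (Fin d)))
    (hom : ∀ a : ℝ, 0 < a → ∀ B : Set (EuclideanSpace ℝ (Fin d)), MeasurableSet B →
      (∃ ε > 0, ∀ x ∈ B, ε ≤ ‖x‖) → ν (a • B) = ENNReal.ofReal (a ^ (-α)) * ν B)
    (v : EuclideanSpace ℝ (Fin d)) (hv : ‖v‖ = 1)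
    (hfin : ν {x | 1 ≤ ⟪v, x⟫} ≠ ⊤) :
    ν {x | ⟪v, x⟫ = 1} = 0 := by
  have hS0meas : MeasurableSet {x : EuclideanSpace ℝ (Fin d) | ⟪v, x⟫ = 1} :=
    (isClosed_eq (continuous_const.inner continuous_id) continuous_const).measurableSet
  have hinner : ∀ x : EuclideanSpace ℝ (Fin d), ⟪v, x⟫ ≤ ‖x‖ := by
    intro x
    have h1 : ⟪v, x⟫ ≤ ‖v‖ * ‖x‖ := real_inner_le_norm v x
    rwa [hv, one_mul] at h1
  have hS0bdd : ∃ ε > 0, ∀ x ∈ {x : EuclideanSpace ℝ (Fin d) | ⟪v, x⟫ = 1}, ε ≤ ‖x‖ :=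
    ⟨1, one_pos, fun x hx => hx ▸ hinner x⟩
  set r : ℕ → ℝ := fun n => 1 + 1/((n : ℝ) + 1) with hr
  have hrpos : ∀ n, 0 < r n := by
    intro n; have : (0:ℝ) < (n:ℝ) + 1 := by positivity
    simp only [hr]; positivity
  have hr1 : ∀ n, 1 ≤ r n := by
    intro n; have : (0:ℝ) < (n:ℝ) + 1 := by positivity
    simp only [hr]; nlinarith [one_div_pos.mpr this]
  have hr2 : ∀ n, r n ≤ 2 := by
    intro n
    have h1 : (1:ℝ) ≤ (n:ℝ) + 1 := by have := Nat.cast_nonneg (α := ℝ) n; linarith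
    have : 1/((n:ℝ)+1) ≤ 1 := by
      rw [div_le_one (by linarith)]; exact h1
    simp only [hr]; linarith
  have hrinj : Function.Injective r := by
    intro i j hij
    simp only [hr] at hij
    have h1 : ((i:ℝ) + 1) ≠ 0 := by positivity
    have h2 : ((j:ℝ) + 1) ≠ 0 := by positivity
    have : (i:ℝ) = (j:ℝ) := by field_simp at hij; linarith
    exact_mod_cast this
  set S : ℕ → Set (EuclideanSpace ℝ (Fin d)) := fun n => {x | ⟪v, x⟫ = r n} with hS
  have hSmeas : ∀ n, MeasurableSet (S n) := fun n =>
    (isClosed_eq (continuous_const.inner continuous_id) continuous_const).measurableSet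
  have hSsmul : ∀ n, S n = r n • {x : EuclideanSpace ℝ (Fin d) | ⟪v, x⟫ = 1} := by
    intro n
    ext x
    rw [Set.mem_smul_set_iff_inv_smul_mem₀ (hrpos n).ne']
    simp only [hS, Set.mem_setOf_eq, real_inner_smul_right]
    rw [inv_mul_eq_one₀ (hrpos n).ne']
    exact eq_comm
  have hSν : ∀ n, ν (S n) = ENNReal.ofReal ((r n) ^ (-α)) * ν {x | ⟪v, x⟫ = 1} := by
    intro n
    rw [hSsmul n]
    exact hom (r n) (hrpos n) _ hS0meas hS0bdd
  have hdisj : Pairwise (Function.onFun Disjoint S) := by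
    intro i j hij
    rw [Function.onFun, Set.disjoint_left]
    intro x hxi hxj
    exact hij (hrinj (hxi.symm.trans hxj))
  have hsub : (⋃ n, S n) ⊆ {x | 1 ≤ ⟪v, x⟫} := by
    intro x hx
    obtain ⟨n, hn⟩ := Set.mem_iUnion.mp hx
    have hxn : ⟪v, x⟫ = r n := hn
    simp only [Set.mem_setOf_eq, hxn]
    exact hr1 n
  have htsum : ∑' n, ν (S n) ≠ ⊤ := by
    rw [← measure_iUnion hdisj hSmeas]
    exact fun h => hfin (top_le_iff.mp (h ▸ measure_mono hsub))
  have htend : Tendsto (fun n => ν (S n)) atTop (nhds 0) :=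
    ENNReal.tendsto_atTop_zero_of_tsum_ne_top htsum
  have hlow : ∀ n, ENNReal.ofReal ((2:ℝ) ^ (-α)) * ν {x | ⟪v, x⟫ = 1} ≤ ν (S n) := by
    intro n
    rw [hSν n]
    refine mul_le_mul_left (ENNReal.ofReal_le_ofReal ?_) _
    exact Real.rpow_le_rpow_of_nonpos (hrpos n) (hr2 n) (neg_nonpos.mpr hα.le)
  have hle : ENNReal.ofReal ((2:ℝ) ^ (-α)) * ν {x | ⟪v, x⟫ = 1} ≤ 0 :=
    ge_of_tendsto htend (Eventually.of_forall hlow)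
  have h2pos : (0:ℝ) < (2:ℝ) ^ (-α) := Real.rpow_pos_of_pos two_pos _
  rcases mul_eq_zero.mp (le_antisymm hle zero_le) with h | h
  · exact absurd h (by simp [ENNReal.ofReal_eq_zero, not_le, h2pos])
  · exact h

set_option maxHeartbeats 2000000 in
/-- Under the conditions of Theorem 2, the probability of the union of all closed
half-spaces of probability at most `s` is `O(s)` as `s ↓ 0`. -/
theorem union_small_halfspaces_O {d : ℕ} {Ω : Type*} [MeasurableSpace Ω]
    (μ : Measure Ω) [IsProbabilityMeasure μ]
    (X : Ω → EuclideanSpace ℝ (Fin d)) (hX : Measurable X)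
    (α c : ℝ) (hα : 0 < α) (hc : 0 < c) (ν : Measure (EuclideanSpace ℝ (Fin d)))
    (hom : ∀ a : ℝ, 0 < a → ∀ B : Set (EuclideanSpace ℝ (Fin d)), MeasurableSet B →
      (∃ ε > 0, ∀ x ∈ B, ε ≤ ‖x‖) → ν (a • B) = ENNReal.ofReal (a ^ (-α)) * ν B)
    (hconv : ∀ B : Set (EuclideanSpace ℝ (Fin d)), MeasurableSet B →
      (∃ ε > 0, ∀ x ∈ B, ε ≤ ‖x‖) → ν (frontier B) = 0 → ν B ≠ ⊤ →
      Tendsto (fun t : ℝ =>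
          (μ {ω | X ω ∈ t • B}).toReal / (μ {ω | t ≤ ‖X ω‖}).toReal)
        atTop (nhds (ν B).toReal))
    (hnorm : Tendsto (fun t : ℝ => (μ {ω | t < ‖X ω‖}).toReal / t ^ (-α))
      atTop (nhds c))
    (hcont : ∀ u : EuclideanSpace ℝ (Fin d), ‖u‖ = 1 →
      Continuous (fun w : ℝ => (μ {ω | ⟪u, X ω⟫ ≤ w}).toReal))
    (hfin : ∀ u : EuclideanSpace ℝ (Fin d), ‖u‖ = 1 → ν {x | 1 ≤ ⟪u, x⟫} ≠ ⊤)
    (hpos : ∃ m > 0, ∀ u : EuclideanSpace ℝ (Fin d), ‖u‖ = 1 →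
      ENNReal.ofReal m ≤ ν {x | 1 ≤ ⟪u, x⟫}) :
    ∃ C > 0, ∀ᶠ s : ℝ in nhdsWithin 0 (Set.Ioi 0),
      Measure.map X μ (⋃₀ {H : Set (EuclideanSpace ℝ (Fin d)) |
          (∃ (u : EuclideanSpace ℝ (Fin d)) (a : ℝ), ‖u‖ = 1 ∧ H = {x | a ≤ ⟪u, x⟫})
          ∧ Measure.map X μ H ≤ ENNReal.ofReal s})
        ≤ ENNReal.ofReal (C * s) := by
  obtain ⟨m, hm, hmν⟩ := hpos
  have line_null : ∀ v : EuclideanSpace ℝ (Fin d), ‖v‖ = 1 → ν {x | ⟪v, x⟫ = 1} = 0 :=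
    fun v hv => aux_line_null α hα ν hom v hv (hfin v hv)
  have hinner : ∀ (v : EuclideanSpace ℝ (Fin d)), ‖v‖ = 1 →
      ∀ x : EuclideanSpace ℝ (Fin d), ⟪v, x⟫ ≤ ‖x‖ := by
    intro v hv x
    have h1 : ⟪v, x⟫ ≤ ‖v‖ * ‖x‖ := real_inner_le_norm v x
    rwa [hv, one_mul] at h1
  have hmeasH : ∀ (u : EuclideanSpace ℝ (Fin d)) (a : ℝ),
      MeasurableSet {x : EuclideanSpace ℝ (Fin d) | a ≤ ⟪u, x⟫} := fun u a =>
    (isClosed_le continuous_const (continuous_const.inner continuous_id)).measurableSet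
  have hmapH : ∀ (u : EuclideanSpace ℝ (Fin d)) (a : ℝ),
      Measure.map X μ {x | a ≤ ⟪u, x⟫} = μ {ω | a ≤ ⟪u, X ω⟫} := by
    intro u a
    rw [Measure.map_apply hX (hmeasH u a)]
    rfl
  set G : ℝ → ℝ := fun t => (μ {ω | t < ‖X ω‖}).toReal with hGdef
  set ψ : EuclideanSpace ℝ (Fin d) → ℝ → ℝ := fun u a => (μ {ω | a ≤ ⟪u, X ω⟫}).toReal
    with hψdef
  -- Step 1: two-sided tail bound from hnorm
  have h1 : ∀ᶠ t : ℝ in atTop, c/2 * t ^ (-α) ≤ G t ∧ G t ≤ 2*c * t ^ (-α) := by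
    have hev : ∀ᶠ t : ℝ in atTop, G t / t ^ (-α) ∈ Set.Ioo (c/2) (2*c) :=
      hnorm.eventually (Ioo_mem_nhds (by linarith) (by linarith))
    filter_upwards [hev, eventually_gt_atTop (0:ℝ)] with t ht htpos
    have hp : (0:ℝ) < t ^ (-α) := Real.rpow_pos_of_pos htpos _
    obtain ⟨hlo, hhi⟩ := ht
    constructor
    · calc c/2 * t ^ (-α) ≤ (G t / t ^ (-α)) * t ^ (-α) := by nlinarith
        _ = G t := by field_simp
    · calc G t = (G t / t ^ (-α)) * t ^ (-α) := by field_simp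
        _ ≤ 2*c * t ^ (-α) := by nlinarith
  -- Step 2: per-direction lower bound
  have hψv : ∀ v : EuclideanSpace ℝ (Fin d), ‖v‖ = 1 →
      ∀ᶠ t : ℝ in atTop, m*c/4 * t ^ (-α) ≤ ψ v t := by
    intro v hv
    set B : Set (EuclideanSpace ℝ (Fin d)) := {x | 1 ≤ ⟪v, x⟫} with hBdef
    have hBmeas : MeasurableSet B := hmeasH v 1
    have hBbdd : ∃ ε > 0, ∀ x ∈ B, ε ≤ ‖x‖ :=
      ⟨1, one_pos, fun x hx => le_trans hx (hinner v hv x)⟩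
    have hBfin : ν B ≠ ⊤ := hfin v hv
    have hfront : ν (frontier B) = 0 := by
      refine measure_mono_null ?_ (line_null v hv)
      have hclosed : IsClosed B :=
        isClosed_le continuous_const (continuous_const.inner continuous_id)
      have hopen_sub : {x : EuclideanSpace ℝ (Fin d) | 1 < ⟪v, x⟫} ⊆ interior B :=
        (isOpen_lt continuous_const (continuous_const.inner continuous_id)).subset_interior_iff.mpr
          (fun x hx => show (1:ℝ) ≤ ⟪v,x⟫ from le_of_lt hx)
      intro x hx
      rw [hclosed.frontier_eq] at hx
      obtain ⟨hxB, hxni⟩ := hx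
      exact le_antisymm (not_lt.mp (fun h => hxni (hopen_sub h))) hxB
    have hconvB := hconv B hBmeas hBbdd hfront hBfin
    have hνB : m/2 < (ν B).toReal := by
      have h2 : m ≤ (ν B).toReal := (ENNReal.ofReal_le_iff_le_toReal hBfin).mp (hmν v hv)
      linarith
    have hev1 : ∀ᶠ t : ℝ in atTop,
        m/2 < (μ {ω | X ω ∈ t • B}).toReal / (μ {ω | t ≤ ‖X ω‖}).toReal :=
      hconvB.eventually_const_lt hνB
    filter_upwards [hev1, h1, eventually_ge_atTop (1:ℝ)] with t hratio hG ht1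
    obtain ⟨hGlo, -⟩ := hG
    have htpos : (0:ℝ) < t := lt_of_lt_of_le one_pos ht1
    have hsmul : {ω | X ω ∈ t • B} = {ω | t ≤ ⟪v, X ω⟫} := by
      ext ω
      simp only [Set.mem_setOf_eq, Set.mem_smul_set_iff_inv_smul_mem₀ htpos.ne', hBdef,
        real_inner_smul_right]
      rw [le_inv_mul_iff₀ htpos, mul_one]
    have hD : c/2 * t ^ (-α) ≤ (μ {ω | t ≤ ‖X ω‖}).toReal := by
      refine le_trans hGlo ?_
      exact ENNReal.toReal_mono (measure_ne_top μ _)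
        (measure_mono (fun ω (h : t < ‖X ω‖) => le_of_lt h))
    have hpow : (0:ℝ) < t ^ (-α) := Real.rpow_pos_of_pos htpos _
    have hDpos : 0 < (μ {ω | t ≤ ‖X ω‖}).toReal := lt_of_lt_of_le (by nlinarith) hD
    rw [hsmul] at hratio
    have hnum : m/2 * (μ {ω | t ≤ ‖X ω‖}).toReal ≤ (μ {ω | t ≤ ⟪v, X ω⟫}).toReal :=
      le_of_lt ((lt_div_iff₀ hDpos).mp hratio)
    calc m*c/4 * t ^ (-α) = m/2 * (c/2 * t ^ (-α)) := by ring
      _ ≤ m/2 * (μ {ω | t ≤ ‖X ω‖}).toReal := by nlinarith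
      _ ≤ ψ v t := hnum
  -- Step 3: choose K and a finite net of the sphere
  have h2α : (0:ℝ) < (2:ℝ) ^ α := Real.rpow_pos_of_pos two_pos α
  obtain ⟨K, hKbd, hK1⟩ : ∃ K : ℝ, K ^ (-α) ≤ m/(32 * (2:ℝ)^α) ∧ 1 ≤ K := by
    have h := (tendsto_rpow_neg_atTop hα).eventually_le_const
      (show (0:ℝ) < m/(32*(2:ℝ)^α) by positivity)
    exact (h.and (eventually_ge_atTop 1)).exists
  have hKpos : (0:ℝ) < K := lt_of_lt_of_le one_pos hK1
  obtain ⟨F, hF⟩ := (isCompact_sphere (0 : EuclideanSpace ℝ (Fin d)) 1).elim_finite_subcover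
    (fun v : Metric.sphere (0 : EuclideanSpace ℝ (Fin d)) 1 =>
      Metric.ball (v : EuclideanSpace ℝ (Fin d)) K⁻¹)
    (fun v => Metric.isOpen_ball)
    (fun x hx => Set.mem_iUnion.mpr ⟨⟨x, hx⟩, Metric.mem_ball_self (inv_pos.mpr hKpos)⟩)
  have hFall : ∀ᶠ t : ℝ in atTop, ∀ v ∈ F,
      m*c/4 * t ^ (-α) ≤ ψ (v : EuclideanSpace ℝ (Fin d)) t := by
    rw [eventually_all_finset]
    intro v hvF
    exact hψv v (mem_sphere_zero_iff_norm.mp v.2)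
  obtain ⟨t₀, ht₀⟩ := eventually_atTop.mp (h1.and hFall)
  set a₀ : ℝ := max t₀ 1 with ha₀def
  have ha₀1 : (1:ℝ) ≤ a₀ := le_max_right _ _
  have ha₀t : t₀ ≤ a₀ := le_max_left _ _
  have ha₀pos : (0:ℝ) < a₀ := lt_of_lt_of_le one_pos ha₀1
  -- Step 4: uniform lower bound
  set c₁ : ℝ := m*c/8 * ((2:ℝ)^α)⁻¹ with hc₁def
  have hc₁pos : 0 < c₁ := by positivity
  have key : ∀ u : EuclideanSpace ℝ (Fin d), ‖u‖ = 1 →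
      ∀ a : ℝ, a₀ ≤ a → c₁ * a ^ (-α) ≤ ψ u a := by
    intro u hu a ha
    have ha1 : (1:ℝ) ≤ a := le_trans ha₀1 ha
    have hapos : (0:ℝ) < a := lt_of_lt_of_le one_pos ha1
    obtain ⟨v, hvF, hball⟩ : ∃ v ∈ F,
        u ∈ Metric.ball (v : EuclideanSpace ℝ (Fin d)) K⁻¹ := by
      have hu' : u ∈ Metric.sphere (0 : EuclideanSpace ℝ (Fin d)) 1 :=
        mem_sphere_zero_iff_norm.mpr hu
      simpa using Set.mem_iUnion₂.mp (hF hu')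
    have hvnorm : ‖(v : EuclideanSpace ℝ (Fin d))‖ = 1 := mem_sphere_zero_iff_norm.mp v.2
    have hta : t₀ ≤ a := le_trans ha₀t ha
    have h2a : t₀ ≤ 2*a := by linarith
    have hKa : t₀ ≤ K*a := by nlinarith
    have hψv2a : m*c/4 * (2*a) ^ (-α) ≤ ψ (v : EuclideanSpace ℝ (Fin d)) (2*a) :=
      (ht₀ (2*a) h2a).2 v hvF
    have hGup : G (K*a) ≤ 2*c * (K*a) ^ (-α) := (ht₀ (K*a) hKa).1.2
    -- inclusion
    have hincl : {ω | 2*a ≤ ⟪(v : EuclideanSpace ℝ (Fin d)), X ω⟫} ⊆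
        {ω | a ≤ ⟪u, X ω⟫} ∪ {ω | K*a < ‖X ω‖} := by
      intro ω hω
      by_cases hKx : K*a < ‖X ω‖
      · exact Or.inr hKx
      · left
        have hxnorm : ‖X ω‖ ≤ K*a := not_lt.mp hKx
        have hdist : ‖(v : EuclideanSpace ℝ (Fin d)) - u‖ < K⁻¹ := by
          have hb := hball
          rw [Metric.mem_ball, dist_eq_norm] at hb
          calc ‖(v : EuclideanSpace ℝ (Fin d)) - u‖ = ‖u - (v : EuclideanSpace ℝ (Fin d))‖ :=
                norm_sub_rev _ _
            _ < K⁻¹ := hb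
        have hsub : ⟪(v : EuclideanSpace ℝ (Fin d)) - u, X ω⟫ ≤ a := by
          calc ⟪(v : EuclideanSpace ℝ (Fin d)) - u, X ω⟫
              ≤ ‖(v : EuclideanSpace ℝ (Fin d)) - u‖ * ‖X ω‖ := real_inner_le_norm _ _
            _ ≤ K⁻¹ * (K*a) := mul_le_mul hdist.le hxnorm (norm_nonneg _)
                (inv_pos.mpr hKpos).le
            _ = a := by field_simp
        have hsplit : ⟪u, X ω⟫ = ⟪(v : EuclideanSpace ℝ (Fin d)), X ω⟫ -
            ⟪(v : EuclideanSpace ℝ (Fin d)) - u, X ω⟫ := by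
          rw [inner_sub_left]; ring
        have h2 : 2*a ≤ ⟪(v : EuclideanSpace ℝ (Fin d)), X ω⟫ := hω
        show a ≤ ⟪u, X ω⟫
        rw [hsplit]; linarith
    have hmeas1 : ψ (v : EuclideanSpace ℝ (Fin d)) (2*a) ≤ ψ u a + G (K*a) := by
      show (μ {ω | 2*a ≤ ⟪(v : EuclideanSpace ℝ (Fin d)), X ω⟫}).toReal ≤
        (μ {ω | a ≤ ⟪u, X ω⟫}).toReal + (μ {ω | K*a < ‖X ω‖}).toReal
      calc (μ {ω | 2*a ≤ ⟪(v : EuclideanSpace ℝ (Fin d)), X ω⟫}).toReal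
          ≤ (μ ({ω | a ≤ ⟪u, X ω⟫} ∪ {ω | K*a < ‖X ω‖})).toReal :=
            ENNReal.toReal_mono (measure_ne_top μ _) (measure_mono hincl)
        _ ≤ _ := by
            rw [← ENNReal.toReal_add (measure_ne_top μ _) (measure_ne_top μ _)]
            exact ENNReal.toReal_mono
              (ENNReal.add_ne_top.mpr ⟨measure_ne_top μ _, measure_ne_top μ _⟩)
              (measure_union_le _ _)
    have hpa : (0:ℝ) < a ^ (-α) := Real.rpow_pos_of_pos hapos _
    have h2a' : ((2*a):ℝ) ^ (-α) = (2:ℝ) ^ (-α) * a ^ (-α) :=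
      Real.mul_rpow (by norm_num) hapos.le
    have hKa' : ((K*a):ℝ) ^ (-α) = K ^ (-α) * a ^ (-α) := Real.mul_rpow hKpos.le hapos.le
    have h2neg : (2:ℝ) ^ (-α) = ((2:ℝ)^α)⁻¹ := Real.rpow_neg (by norm_num) α
    have hKα' : K ^ (-α) ≤ m * ((2:ℝ)^α)⁻¹ / 32 := by
      refine le_trans hKbd (le_of_eq ?_)
      rw [mul_comm (32:ℝ), ← div_div, div_eq_mul_inv m]
    have hI : (0:ℝ) < ((2:ℝ)^α)⁻¹ := by positivity
    calc c₁ * a ^ (-α) ≤ m*c/4 * ((2*a) ^ (-α)) - 2*c * ((K*a) ^ (-α)) := by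
          rw [h2a', hKa', h2neg, hc₁def]
          nlinarith [mul_le_mul_of_nonneg_right hKα' hpa.le, mul_pos hI hpa]
      _ ≤ ψ (v : EuclideanSpace ℝ (Fin d)) (2*a) - G (K*a) := sub_le_sub hψv2a hGup
      _ ≤ ψ u a := by linarith [hmeas1]
  -- Step 5: monotonicity and small-level bound
  have hψmono : ∀ u : EuclideanSpace ℝ (Fin d), ∀ a b : ℝ, a ≤ b → ψ u b ≤ ψ u a := by
    intro u a b hab
    exact ENNReal.toReal_mono (measure_ne_top μ _)
      (measure_mono (fun ω (h : b ≤ ⟪u, X ω⟫) => le_trans hab h))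
  set p₀ : ℝ := c₁ * a₀ ^ (-α) with hp₀def
  have hp₀pos : 0 < p₀ := mul_pos hc₁pos (Real.rpow_pos_of_pos ha₀pos _)
  -- Step 6: conclusion
  set s₀ : ℝ := min p₀ (c₁ * ((2*a₀) ^ α)⁻¹) with hs₀def
  have h2a₀p : (0:ℝ) < (2*a₀) ^ α := Real.rpow_pos_of_pos (by linarith) _
  have hs₀pos : 0 < s₀ := lt_min hp₀pos (mul_pos hc₁pos (inv_pos.mpr h2a₀p))
  refine ⟨2*c*(2:ℝ)^α/c₁, div_pos (by positivity) hc₁pos, ?_⟩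
  filter_upwards [Ioo_mem_nhdsGT_of_mem (Set.mem_Ico.mpr ⟨le_refl 0, hs₀pos⟩)] with s hs
  obtain ⟨hspos, hss₀⟩ := hs
  set T : ℝ := (c₁/s) ^ α⁻¹ with hTdef
  have hcs : (0:ℝ) < c₁/s := div_pos hc₁pos hspos
  have hTpos : 0 < T := Real.rpow_pos_of_pos hcs _
  have hTα : T ^ α = c₁/s := Real.rpow_inv_rpow hcs.le hα.ne'
  have hT2a₀ : 2*a₀ ≤ T := by
    have h1' : s ≤ c₁ * ((2*a₀)^α)⁻¹ := le_of_lt (lt_of_lt_of_le hss₀ (min_le_right _ _))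
    have h2' : (2*a₀)^α ≤ c₁/s := by
      rw [le_div_iff₀ hspos]
      calc (2*a₀)^α * s ≤ (2*a₀)^α * (c₁ * ((2*a₀)^α)⁻¹) := by nlinarith
        _ = c₁ := by field_simp
    calc 2*a₀ = ((2*a₀)^α) ^ α⁻¹ := (Real.rpow_rpow_inv (by linarith) hα.ne').symm
      _ ≤ T := Real.rpow_le_rpow h2a₀p.le h2' (by positivity)
  have hUsub : (⋃₀ {H : Set (EuclideanSpace ℝ (Fin d)) |
      (∃ (u : EuclideanSpace ℝ (Fin d)) (a : ℝ), ‖u‖ = 1 ∧ H = {x | a ≤ ⟪u, x⟫})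
      ∧ Measure.map X μ H ≤ ENNReal.ofReal s})
      ⊆ {x : EuclideanSpace ℝ (Fin d) | T ≤ ‖x‖} := by
    rintro x ⟨H, ⟨⟨u, a, hu, rfl⟩, hHs⟩, hxH⟩
    have hψs : ψ u a ≤ s := by
      rw [hmapH u a] at hHs
      calc ψ u a ≤ (ENNReal.ofReal s).toReal :=
            ENNReal.toReal_mono ENNReal.ofReal_ne_top hHs
        _ = s := ENNReal.toReal_ofReal hspos.le
    have haa₀ : a₀ < a := by
      by_contra hcon
      push_neg at hcon
      have h1' : p₀ ≤ ψ u a := le_trans (key u hu a₀ le_rfl) (hψmono u a a₀ hcon)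
      have h2' : s < p₀ := lt_of_lt_of_le hss₀ (min_le_left _ _)
      linarith
    have hkey := key u hu a haa₀.le
    have hapos : 0 < a := lt_trans ha₀pos haa₀
    have haT : T ≤ a := by
      have hrw : a ^ (-α) = (a^α)⁻¹ := Real.rpow_neg hapos.le α
      have h3' : (0:ℝ) < a^α := Real.rpow_pos_of_pos hapos _
      have h1' : c₁/s ≤ a^α := by
        rw [div_le_iff₀ hspos]
        have h2' : c₁ * (a^α)⁻¹ ≤ s := by rw [← hrw]; linarith
        calc c₁ = (c₁ * (a^α)⁻¹) * a^α := by field_simp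
          _ ≤ a^α * s := by nlinarith
      calc T ≤ (a^α) ^ α⁻¹ := Real.rpow_le_rpow hcs.le h1' (by positivity)
        _ = a := Real.rpow_rpow_inv hapos.le hα.ne'
    have hax : a ≤ ⟪u, x⟫ := hxH
    exact le_trans haT (le_trans hax (hinner u hu x))
  have hmeasT : MeasurableSet {x : EuclideanSpace ℝ (Fin d) | T ≤ ‖x‖} :=
    (isClosed_le continuous_const continuous_norm).measurableSet
  calc Measure.map X μ _ ≤ Measure.map X μ {x : EuclideanSpace ℝ (Fin d) | T ≤ ‖x‖} :=
        measure_mono hUsub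
    _ = μ {ω | T ≤ ‖X ω‖} := by rw [Measure.map_apply hX hmeasT]; rfl
    _ ≤ μ {ω | T/2 < ‖X ω‖} :=
        measure_mono (fun ω (h : T ≤ ‖X ω‖) => lt_of_lt_of_le (by linarith) h)
    _ = ENNReal.ofReal (G (T/2)) := (ENNReal.ofReal_toReal (measure_ne_top μ _)).symm
    _ ≤ ENNReal.ofReal (2*c*(2:ℝ)^α/c₁ * s) := by
        apply ENNReal.ofReal_le_ofReal
        have hT2 : t₀ ≤ T/2 := by linarith
        have hGT : G (T/2) ≤ 2*c * (T/2) ^ (-α) := (ht₀ (T/2) hT2).1.2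
        have hT2pos : (0:ℝ) < T/2 := by linarith
        have hrw : (T/2) ^ (-α) = s/c₁ * (2:ℝ)^α := by
          have h2' : (T/2) ^ (-α) = ((T/2)^α)⁻¹ := Real.rpow_neg hT2pos.le α
          have h3' : (T/2)^α = T^α * ((2:ℝ)^α)⁻¹ := by
            rw [div_eq_mul_inv, Real.mul_rpow hTpos.le (by positivity),
              Real.inv_rpow (by norm_num)]
          rw [h2', h3', hTα]
          rw [mul_inv, inv_inv, div_eq_mul_inv, mul_inv, inv_inv]
          ring
        rw [hrw] at hGT
        calc G (T/2) ≤ 2*c * (s/c₁ * (2:ℝ)^α) := hGT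
          _ = 2*c*(2:ℝ)^α/c₁ * s := by field_simp
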